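/- For the top-k norm Phi_k on R^n, there are absolute constants lambda_1, lambda_2 > 0 such that lambda_1 * k/sqrt(n) <= M_{Phi_k} <= lambda_2 * k * sqrt(log n)/sqrt(n), where M_{Phi_k} is the median of Phi_k over the uniform distribution on the Euclidean unit sphere S^{n-1}. -/

import Mathlib

open MeasureTheory Metric
open scoped ENNReal

open scoped Pointwise

section Helpers

open scoped Pointwise RealInnerProductSpace

lemma count_powersetCard {n k : ℕ} (hk1 : 1 ≤ k) (i : Fin n) :
    ((Finset.univ.powersetCard k : Finset (Finset (Fin n))).filter (fun S => i ∈ S)).card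
      = (n-1).choose (k-1) := by
  rw [show (n-1).choose (k-1) = ((Finset.univ.erase i).powersetCard (k-1)).card by
    rw [Finset.card_powersetCard, Finset.card_erase_of_mem (Finset.mem_univ i),
      Finset.card_univ, Fintype.card_fin]]
  refine Finset.card_bij' (fun S _ => S.erase i) (fun T _ => insert i T) ?_ ?_ ?_ ?_
  · intro S hS
    simp only [Finset.mem_filter, Finset.mem_powersetCard] at hS
    rw [Finset.mem_powersetCard]
    constructor
    · intro j hj
      exact Finset.mem_erase.mpr ⟨(Finset.mem_erase.mp hj).1, Finset.mem_univ j⟩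
    · rw [Finset.card_erase_of_mem hS.2, hS.1.2]
  · intro T hT
    rw [Finset.mem_powersetCard] at hT
    have hiT : i ∉ T := fun h => by simpa using hT.1 h
    simp only [Finset.mem_filter, Finset.mem_powersetCard]
    refine ⟨⟨fun j _ => Finset.mem_univ j, ?_⟩, Finset.mem_insert_self i T⟩
    rw [Finset.card_insert_of_notMem hiT, hT.2]
    omega
  · intro S hS
    rw [Finset.mem_filter] at hS
    exact Finset.insert_erase hS.2
  · intro T hT
    rw [Finset.mem_powersetCard] at hT
    have hiT : i ∉ T := fun h => by simpa using hT.1 h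
    exact Finset.erase_insert hiT

lemma pow_self_le_exp_mul_factorial : ∀ n : ℕ, (n:ℝ)^n ≤ Real.exp 1 ^ n * n.factorial := by
  intro n
  induction n with
  | zero => simp
  | succ m ih =>
      rcases Nat.eq_zero_or_pos m with hm | hm
      · subst hm
        simp
      · have hstep : ((m:ℝ)+1)^m ≤ Real.exp 1 * (m:ℝ)^m := by
          have h1 : (m:ℝ)+1 ≤ (m:ℝ) * Real.exp (1/(m:ℝ)) := by
            have h := Real.add_one_le_exp (1/(m:ℝ))
            have hmpos : (0:ℝ) < m := by exact_mod_cast hm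
            have h2 := mul_le_mul_of_nonneg_left h (le_of_lt hmpos)
            have e : (m:ℝ)*(1/(m:ℝ)+1) = (m:ℝ)+1 := by field_simp; ring
            linarith
          have h2 : ((m:ℝ)+1)^m ≤ ((m:ℝ) * Real.exp (1/(m:ℝ)))^m :=
            pow_le_pow_left₀ (by positivity) h1 m
          calc ((m:ℝ)+1)^m ≤ ((m:ℝ) * Real.exp (1/(m:ℝ)))^m := h2
            _ = (m:ℝ)^m * Real.exp (1/(m:ℝ))^m := mul_pow _ _ _
            _ = (m:ℝ)^m * Real.exp ((m:ℕ) * (1/(m:ℝ))) := by rw [Real.exp_nat_mul]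
            _ = (m:ℝ)^m * Real.exp 1 := by
                congr 2
                have hmpos : (0:ℝ) < m := by exact_mod_cast hm
                field_simp
            _ = Real.exp 1 * (m:ℝ)^m := mul_comm _ _
        have hfac : ((m+1).factorial : ℝ) = ((m:ℝ)+1) * m.factorial := by
          rw [Nat.factorial_succ]
          push_cast
          ring
        calc ((m+1:ℕ):ℝ)^(m+1) = ((m:ℝ)+1) * ((m:ℝ)+1)^m := by push_cast; ring
          _ ≤ ((m:ℝ)+1) * (Real.exp 1 * (m:ℝ)^m) := by
              apply mul_le_mul_of_nonneg_left hstep (by positivity)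
          _ ≤ ((m:ℝ)+1) * (Real.exp 1 * (Real.exp 1 ^ m * m.factorial)) := by
              apply mul_le_mul_of_nonneg_left _ (by positivity)
              exact mul_le_mul_of_nonneg_left ih (by positivity)
          _ = Real.exp 1 ^ (m+1) * ((m+1).factorial) := by
              rw [hfac]
              ring

lemma sqrt_one_sub_le_exp (c : ℝ) : Real.sqrt (1 - c^2) ≤ Real.exp (-(c^2)/2) := by
  have h1 : 1 - c^2 ≤ Real.exp (-(c^2)) := by
    have := Real.add_one_le_exp (-(c^2))
    linarith
  calc Real.sqrt (1 - c^2) ≤ Real.sqrt (Real.exp (-(c^2))) := Real.sqrt_le_sqrt h1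
    _ = Real.exp (-(c^2)/2) := (Real.exp_half _).symm

lemma nine_n_le (n : ℕ) (hn : 2 ≤ n) : 9 * (n:ℝ) ≤ 2 * 3^n := by
  induction n with
  | zero => omega
  | succ m ih =>
      rcases Nat.lt_or_ge m 2 with hm | hm
      · interval_cases m
        · omega
        · push_cast; norm_num
      · have h1 := ih hm
        have h9 : (9:ℝ) ≤ 3^m := by
          calc (9:ℝ) = 3^2 := by norm_num
            _ ≤ 3^m := pow_le_pow_right₀ (by norm_num) hm
        push_cast
        rw [pow_succ]
        push_cast at h1
        linarith

lemma half_le_ofReal_contra {q : ℝ} (hq : q < 1/2) (h : (1/2:ℝ≥0∞) ≤ ENNReal.ofReal q) :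
    False := by
  have h2 : ENNReal.ofReal q < ENNReal.ofReal (1/2) :=
    (ENNReal.ofReal_lt_ofReal_iff (by norm_num)).mpr hq
  have h3 : ENNReal.ofReal (1/2 : ℝ) = (1/2:ℝ≥0∞) := by
    rw [ENNReal.ofReal_div_of_pos (by norm_num)]
    norm_num
  rw [h3] at h2
  exact absurd (lt_of_le_of_lt h h2) (lt_irrefl _)

lemma coord_le_norm {n : ℕ} (y : EuclideanSpace ℝ (Fin n)) (i : Fin n) : |y i| ≤ ‖y‖ := by
  rw [EuclideanSpace.norm_eq]
  calc |y i| = Real.sqrt (‖y i‖^2) := by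
        rw [Real.sqrt_sq_eq_abs, Real.norm_eq_abs, abs_abs]
    _ ≤ Real.sqrt (∑ j, ‖y j‖^2) := Real.sqrt_le_sqrt
        (Finset.single_le_sum (f := fun j => ‖y j‖^2) (fun j _ => by positivity)
          (Finset.mem_univ i))

lemma mem_cap {n : ℕ} {y : EuclideanSpace ℝ (Fin n)} {c : ℝ} (hc : 0 ≤ c) (hy : ‖y‖ ≤ 1)
    {i : Fin n} (hyi : c ≤ y i) :
    y ∈ closedBall (EuclideanSpace.single i c) (Real.sqrt (1 - c^2)) := by
  rw [mem_closedBall, dist_eq_norm]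
  have hinner : ⟪y, EuclideanSpace.single i c⟫ = c * y i := by
    rw [EuclideanSpace.inner_single_right]
    simp
  have hsq : ‖y - EuclideanSpace.single i c‖^2 ≤ 1 - c^2 := by
    rw [norm_sub_sq_real, hinner, EuclideanSpace.norm_single]
    have h1 : ‖y‖^2 ≤ 1 := by nlinarith [norm_nonneg y]
    have h2 : ‖c‖ = c := by rw [Real.norm_eq_abs, abs_of_nonneg hc]
    rw [h2]
    nlinarith
  calc ‖y - EuclideanSpace.single i c‖
      = Real.sqrt (‖y - EuclideanSpace.single i c‖^2) := (Real.sqrt_sq (norm_nonneg _)).symm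
    _ ≤ Real.sqrt (1 - c^2) := Real.sqrt_le_sqrt hsq

lemma single_neg' {n : ℕ} (i : Fin n) (c : ℝ) :
    EuclideanSpace.single i (-c) = - EuclideanSpace.single i c := by
  ext j
  simp [EuclideanSpace.single_apply]
  by_cases h : j = i <;> simp [h]

lemma mem_cap_neg {n : ℕ} {y : EuclideanSpace ℝ (Fin n)} {c : ℝ} (hc : 0 ≤ c) (hy : ‖y‖ ≤ 1)
    {i : Fin n} (hyi : y i ≤ -c) :
    y ∈ closedBall (EuclideanSpace.single i (-c)) (Real.sqrt (1 - c^2)) := by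
  have h1 : (-y) ∈ closedBall (EuclideanSpace.single i c) (Real.sqrt (1 - c^2)) := by
    apply mem_cap hc (by rwa [norm_neg])
    have : (-y) i = -(y i) := rfl
    rw [this]
    linarith
  rw [mem_closedBall] at h1 ⊢
  rw [single_neg', ← dist_neg_neg y, neg_neg]
  exact h1

lemma l1ball_volume (n : ℕ) (hn : 1 ≤ n) {R : ℝ} (hR : 0 ≤ R) :
    volume {y : EuclideanSpace ℝ (Fin n) | ∑ i, |y i| ≤ R}
      = ENNReal.ofReal ((2*R)^n / n.factorial) := by
  have : Nonempty (Fin n) := ⟨⟨0, by omega⟩⟩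
  have hmeas : MeasurableSet {x : Fin n → ℝ | ∑ i, |x i| ≤ R} := by
    apply measurableSet_le
    · exact Finset.measurable_sum _ (fun i _ => (measurable_pi_apply i).abs)
    · exact measurable_const
  have hpre : volume {y : EuclideanSpace ℝ (Fin n) | ∑ i, |y i| ≤ R}
      = volume {x : Fin n → ℝ | ∑ i, |x i| ≤ R} :=
    ((EuclideanSpace.volume_preserving_symm_measurableEquiv_toLp (ι := Fin n)).measure_preimage
      hmeas.nullMeasurableSet)
  rw [hpre]
  have h1 := MeasureTheory.volume_sum_rpow_le (Fin n) (le_refl (1:ℝ)) R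
  simp only [Real.rpow_one, one_div_one] at h1
  rw [h1, Fintype.card_fin]
  have hΓ1 : Real.Gamma ((1:ℝ) + 1) = 1 := by
    rw [show ((1:ℝ)+1) = 2 by norm_num, Real.Gamma_two]
  have hΓn : Real.Gamma ((n:ℝ)/1 + 1) = n.factorial := by
    rw [div_one, ← Real.Gamma_nat_eq_factorial]
  rw [hΓ1, hΓn, mul_one, ← ENNReal.ofReal_pow hR, ← ENNReal.ofReal_mul (by positivity)]
  congr 1
  rw [mul_pow]
  ring

lemma cube_le_ball_volume (n : ℕ) (hn : 1 ≤ n) :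
    ENNReal.ofReal ((2 / Real.sqrt n)^n) ≤ volume (ball (0 : EuclideanSpace ℝ (Fin n)) 1) := by
  have hs : (0:ℝ) < Real.sqrt n := Real.sqrt_pos.mpr (by exact_mod_cast hn)
  set a : ℝ := 1 / Real.sqrt n with ha
  have hapos : 0 < a := by positivity
  set C : Set (EuclideanSpace ℝ (Fin n)) := {y | ∀ i, y i ∈ Set.Icc (-a) a} with hC
  have hCmeas : MeasurableSet {x : Fin n → ℝ | ∀ i, x i ∈ Set.Icc (-a) a} := by
    rw [show {x : Fin n → ℝ | ∀ i, x i ∈ Set.Icc (-a) a}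
        = Set.pi Set.univ (fun _ : Fin n => Set.Icc (-a) a) by
      ext x
      simp only [Set.mem_pi, Set.mem_univ, forall_true_left, Set.mem_setOf_eq, Set.mem_Icc,
        forall_const]]
    exact MeasurableSet.univ_pi (fun i => measurableSet_Icc)
  have hvolC : volume C = ENNReal.ofReal ((2 / Real.sqrt n)^n) := by
    have hpre : volume C = volume {x : Fin n → ℝ | ∀ i, x i ∈ Set.Icc (-a) a} :=
      ((EuclideanSpace.volume_preserving_symm_measurableEquiv_toLp (ι := Fin n)).measure_preimage
        hCmeas.nullMeasurableSet)
    rw [hpre, show {x : Fin n → ℝ | ∀ i, x i ∈ Set.Icc (-a) a}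
        = Set.pi Set.univ (fun _ : Fin n => Set.Icc (-a) a) by
      ext x
      simp only [Set.mem_pi, Set.mem_univ, forall_true_left, Set.mem_setOf_eq, Set.mem_Icc,
        forall_const],
      volume_pi_pi]
    simp only [Real.volume_Icc]
    rw [Finset.prod_const, Finset.card_univ, Fintype.card_fin,
      ← ENNReal.ofReal_pow (by linarith : (0:ℝ) ≤ a - (-a))]
    congr 2
    rw [ha]
    ring
  have hsub : C ⊆ closedBall (0 : EuclideanSpace ℝ (Fin n)) 1 := by
    intro y hy
    rw [mem_closedBall_zero_iff]
    rw [EuclideanSpace.norm_eq]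
    rw [show (1:ℝ) = Real.sqrt 1 by rw [Real.sqrt_one]]
    apply Real.sqrt_le_sqrt
    have hterm : ∀ i, ‖y i‖^2 ≤ 1/n := by
      intro i
      have h1 := (hy i).1
      have h2 := (hy i).2
      have hab : |y i| ≤ a := abs_le.mpr ⟨h1, h2⟩
      have hmul := mul_self_le_mul_self (abs_nonneg (y i)) hab
      calc ‖y i‖^2 = |y i| * |y i| := by rw [Real.norm_eq_abs, sq]
        _ ≤ a * a := hmul
        _ = 1/n := by
            rw [ha]
            rw [div_mul_div_comm, one_mul, Real.mul_self_sqrt (by positivity)]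
    calc ∑ i, ‖y i‖^2 ≤ ∑ _i : Fin n, (1:ℝ)/n := Finset.sum_le_sum (fun i _ => hterm i)
      _ = 1 := by
          rw [Finset.sum_const, Finset.card_univ, Fintype.card_fin, nsmul_eq_mul]
          field_simp
  have : Nontrivial (EuclideanSpace ℝ (Fin n)) := by
    have : Nonempty (Fin n) := ⟨⟨0, by omega⟩⟩
    infer_instance
  calc ENNReal.ofReal ((2 / Real.sqrt n)^n) = volume C := hvolC.symm
    _ ≤ volume (closedBall (0 : EuclideanSpace ℝ (Fin n)) 1) := measure_mono hsub
    _ = volume (ball (0 : EuclideanSpace ℝ (Fin n)) 1) :=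
        Measure.addHaar_closedBall_eq_addHaar_ball _ _ _

end Helpers

/-- The uniform (Haar) probability measure on the unit Euclidean sphere in `ℝ^n`. -/
noncomputable def uniformSphere (n : ℕ) :
    Measure (sphere (0 : EuclideanSpace ℝ (Fin n)) 1) :=
  ((volume : Measure (EuclideanSpace ℝ (Fin n))).toSphere Set.univ)⁻¹ •
    (volume : Measure (EuclideanSpace ℝ (Fin n))).toSphere

section Helpers2

open scoped Pointwise

lemma uniformSphere_le {n : ℕ} (hn : 1 ≤ n)
    {A : Set (sphere (0 : EuclideanSpace ℝ (Fin n)) 1)} (hA : MeasurableSet A) {q : ℝ≥0∞}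
    (h : volume (Set.Ioo (0:ℝ) 1 • (Subtype.val '' A))
        ≤ q * volume (ball (0 : EuclideanSpace ℝ (Fin n)) 1)) :
    uniformSphere n A ≤ q := by
  set V := volume (ball (0 : EuclideanSpace ℝ (Fin n)) 1) with hV
  have hdim : Module.finrank ℝ (EuclideanSpace ℝ (Fin n)) = n := finrank_euclideanSpace_fin
  have hVpos : V ≠ 0 := (measure_ball_pos volume _ one_pos).ne'
  have hVtop : V ≠ ⊤ := measure_ball_lt_top.ne
  have happ : uniformSphere n A
      = ((n : ℝ≥0∞) * V)⁻¹ * ((n : ℝ≥0∞) * volume (Set.Ioo (0:ℝ) 1 • (Subtype.val '' A))) := by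
    rw [uniformSphere, Measure.smul_apply, smul_eq_mul,
      Measure.toSphere_apply_univ, Measure.toSphere_apply' _ hA, hdim]
  rw [happ]
  have h2 : (n : ℝ≥0∞) * volume (Set.Ioo (0:ℝ) 1 • (Subtype.val '' A))
      ≤ q * ((n : ℝ≥0∞) * V) := by
    calc (n : ℝ≥0∞) * volume (Set.Ioo (0:ℝ) 1 • (Subtype.val '' A))
        ≤ (n : ℝ≥0∞) * (q * V) := mul_le_mul_right h _
      _ = q * ((n : ℝ≥0∞) * V) := by ring
  calc ((n : ℝ≥0∞) * V)⁻¹ * ((n : ℝ≥0∞) * volume (Set.Ioo (0:ℝ) 1 • (Subtype.val '' A)))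
      ≤ ((n : ℝ≥0∞) * V)⁻¹ * (q * ((n : ℝ≥0∞) * V)) := mul_le_mul_right h2 _
    _ = q * (((n : ℝ≥0∞) * V)⁻¹ * ((n : ℝ≥0∞) * V)) := by ring
    _ = q := by
        rw [ENNReal.inv_mul_cancel, mul_one]
        · exact mul_ne_zero (by exact_mod_cast (by omega : n ≠ 0)) hVpos
        · exact ENNReal.mul_ne_top (ENNReal.natCast_ne_top n) hVtop

end Helpers2

/-- The top-`k` norm on `ℝ^n`: the sum of the `k` largest coordinates of `x` in
absolute value. -/
noncomputable def topkNorm (n k : ℕ) (hk : k ≤ n) (x : Fin n → ℝ) : ℝ :=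
  (Finset.univ.powersetCard k).sup'
    (Finset.powersetCard_nonempty.mpr (by simpa using hk))
    (fun S => ∑ i ∈ S, |x i|)

section Helpers3

lemma topk_ge {n k : ℕ} (hk1 : 1 ≤ k) (hk : k ≤ n) (x : Fin n → ℝ) :
    (k : ℝ) * ∑ i, |x i| ≤ (n : ℝ) * topkNorm n k hk x := by
  set P := (Finset.univ.powersetCard k : Finset (Finset (Fin n))) with hP
  have hPne : P.Nonempty := Finset.powersetCard_nonempty.mpr (by simpa using hk)
  have ht : topkNorm n k hk x = P.sup' hPne (fun S => ∑ i ∈ S, |x i|) := rfl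
  have hsum : ∑ S ∈ P, ∑ i ∈ S, |x i| = ((n-1).choose (k-1) : ℝ) * ∑ i, |x i| := by
    have h1 : ∀ S ∈ P, ∑ i ∈ S, |x i| = ∑ i, if i ∈ S then |x i| else 0 := by
      intro S _
      rw [← Finset.sum_filter]
      congr 1
      ext j
      simp
    rw [Finset.sum_congr rfl h1, Finset.sum_comm, Finset.mul_sum]
    congr 1
    ext i
    rw [← Finset.sum_filter, Finset.sum_const, count_powersetCard hk1 i]
    simp [mul_comm]
  have hle : ∑ S ∈ P, ∑ i ∈ S, |x i| ≤ (P.card : ℝ) * topkNorm n k hk x := by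
    have := Finset.sum_le_card_nsmul P (fun S => ∑ i ∈ S, |x i|) (topkNorm n k hk x)
      (fun S hS => by rw [ht]; exact Finset.le_sup' (fun S => ∑ i ∈ S, |x i|) hS)
    simpa [nsmul_eq_mul] using this
  have hcard : (P.card : ℝ) = n.choose k := by
    rw [hP, Finset.card_powersetCard]; simp
  have hid : (n : ℝ) * (n-1).choose (k-1) = n.choose k * k := by
    have h0 := Nat.add_one_mul_choose_eq (n-1) (k-1)
    have h1 : n - 1 + 1 = n := by omega
    have h2 : k - 1 + 1 = k := by omega
    rw [h1, h2] at h0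
    exact_mod_cast congrArg (Nat.cast : ℕ → ℝ) h0
  have hchoosepos : (0:ℝ) < n.choose k := by
    exact_mod_cast Nat.choose_pos hk
  rw [hcard] at hle
  rw [hsum] at hle
  have key : (n.choose k : ℝ) * ((k:ℝ) * ∑ i, |x i|)
      ≤ (n.choose k : ℝ) * ((n:ℝ) * topkNorm n k hk x) := by
    have e1 : (n.choose k : ℝ) * ((k:ℝ) * ∑ i, |x i|)
        = (n:ℝ) * (((n-1).choose (k-1) : ℝ) * ∑ i, |x i|) := by
      rw [← mul_assoc, ← hid, mul_assoc]
    rw [e1, show (n.choose k : ℝ) * ((n:ℝ) * topkNorm n k hk x)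
        = (n:ℝ) * ((n.choose k : ℝ) * topkNorm n k hk x) by ring]
    exact mul_le_mul_of_nonneg_left hle (by positivity : (0:ℝ) ≤ (n:ℝ))
  exact le_of_mul_le_mul_left key hchoosepos

lemma topk_le_exists {n k : ℕ} (hk : k ≤ n) (x : Fin n → ℝ) :
    ∃ S : Finset (Fin n), S.card = k ∧ topkNorm n k hk x = ∑ i ∈ S, |x i| := by
  obtain ⟨S, hS, hval⟩ := Finset.exists_mem_eq_sup'
    (Finset.powersetCard_nonempty.mpr (by simpa using hk) :
      (Finset.univ.powersetCard k : Finset (Finset (Fin n))).Nonempty)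
    (fun S => ∑ i ∈ S, |x i|)
  exact ⟨S, (Finset.mem_powersetCard.mp hS).2, hval⟩

end Helpers3

/-- There are absolute constants `λ₁, λ₂ > 0` such that for all `n ≥ 2` and
`1 ≤ k ≤ n`, any median `M` of the top-`k` norm over the uniform measure on
`S^{n-1}` satisfies `λ₁ k/√n ≤ M ≤ λ₂ k √(log n)/√n`. -/
theorem median_topk_on_sphere :
    ∃ lam₁ lam₂ : ℝ, 0 < lam₁ ∧ 0 < lam₂ ∧
      ∀ n k : ℕ, 2 ≤ n → 1 ≤ k → ∀ hk : k ≤ n, ∀ M : ℝ,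
      (1 / 2 : ℝ≥0∞) ≤
        uniformSphere n {x | topkNorm n k hk (fun i => (x : EuclideanSpace ℝ (Fin n)) i) ≤ M} →
      (1 / 2 : ℝ≥0∞) ≤
        uniformSphere n {x | M ≤ topkNorm n k hk (fun i => (x : EuclideanSpace ℝ (Fin n)) i)} →
      lam₁ * k / Real.sqrt n ≤ M ∧
        M ≤ lam₂ * k * Real.sqrt (Real.log n) / Real.sqrt n := by
  classical
  refine ⟨1/22, 10, by norm_num, by norm_num, ?_⟩
  intro n k hn2 hk1 hk M h₁ h₂
  have hn1 : 1 ≤ n := by omega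
  have hnR : (2:ℝ) ≤ n := by exact_mod_cast hn2
  have hnpos : (0:ℝ) < n := by linarith
  have hsq : (0:ℝ) < Real.sqrt n := Real.sqrt_pos.mpr hnpos
  have hkR : (0:ℝ) < k := by exact_mod_cast hk1
  have hfacpos : (0:ℝ) < n.factorial := by exact_mod_cast Nat.factorial_pos n
  constructor
  · -- lower bound
    by_contra hM
    push_neg at hM
    set R : ℝ := Real.sqrt n / 22 with hR
    have hR0 : (0:ℝ) ≤ R := by positivity
    set A : Set (sphere (0 : EuclideanSpace ℝ (Fin n)) 1) :=
      {x | ∑ i, |(x : EuclideanSpace ℝ (Fin n)) i| ≤ R} with hA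
    have hcont : Continuous fun x : sphere (0 : EuclideanSpace ℝ (Fin n)) 1 =>
        ∑ i, |(x : EuclideanSpace ℝ (Fin n)) i| :=
      continuous_finset_sum _ (fun i _ =>
        ((EuclideanSpace.proj i).continuous.comp continuous_subtype_val).abs)
    have hAmeas : MeasurableSet A := (isClosed_le hcont continuous_const).measurableSet
    have hsub : {x : sphere (0 : EuclideanSpace ℝ (Fin n)) 1 |
        topkNorm n k hk (fun i => (x : EuclideanSpace ℝ (Fin n)) i) ≤ M} ⊆ A := by
      intro x hx
      simp only [Set.mem_setOf_eq] at hx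
      have hge := topk_ge hk1 hk (fun i => (x : EuclideanSpace ℝ (Fin n)) i)
      have h6 : (n:ℝ) * M < (k:ℝ) * R := by
        have hlt := mul_lt_mul_of_pos_left hM hnpos
        calc (n:ℝ)*M < (n:ℝ)*(1/22*(k:ℝ)/Real.sqrt n) := hlt
          _ = (k:ℝ) * R := by
              rw [hR, show (n:ℝ)*(1/22*(k:ℝ)/Real.sqrt n)
                = (k:ℝ)*((n:ℝ)/Real.sqrt n)/22 by ring, Real.div_sqrt]
              ring
      have h7 : (n:ℝ) * topkNorm n k hk (fun i => (x : EuclideanSpace ℝ (Fin n)) i)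
          ≤ (n:ℝ) * M := mul_le_mul_of_nonneg_left hx (by positivity)
      have h8 : (k:ℝ) * ∑ i, |(x : EuclideanSpace ℝ (Fin n)) i| < (k:ℝ) * R :=
        lt_of_le_of_lt (hge.trans h7) h6
      exact le_of_lt ((mul_lt_mul_iff_right₀ hkR).mp h8)
    have keyreal : (2*R)^n / n.factorial ≤ (1/64)*(2/Real.sqrt n)^n := by
      have hmm : 2*R = Real.sqrt n/11 := by rw [hR]; ring
      have hx2 : (Real.sqrt n/11)^n * (Real.sqrt n/2)^n = ((n:ℝ)/22)^n := by
        rw [← mul_pow]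
        congr 1
        rw [div_mul_div_comm, Real.mul_self_sqrt (le_of_lt hnpos)]
        norm_num
      have hkey2 : ((n:ℝ)/22)^n ≤ (1/64) * n.factorial := by
        have h1 : ((n:ℝ))^n ≤ Real.exp 1 ^ n * n.factorial := pow_self_le_exp_mul_factorial n
        have he : Real.exp 1 ≤ 2.75 := by
          have := Real.exp_one_lt_d9
          linarith
        calc ((n:ℝ)/22)^n = (n:ℝ)^n / 22^n := div_pow _ _ _
          _ ≤ (Real.exp 1 ^ n * n.factorial) / 22^n := by
              apply div_le_div_of_nonneg_right h1 (by positivity) |>.trans_eq rfl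
          _ = (Real.exp 1/22)^n * n.factorial := by
              rw [div_pow]
              ring
          _ ≤ (1/8:ℝ)^n * n.factorial := by
              apply mul_le_mul_of_nonneg_right _ (le_of_lt hfacpos)
              apply pow_le_pow_left₀ (by positivity)
              linarith
          _ ≤ (1/64:ℝ) * n.factorial := by
              apply mul_le_mul_of_nonneg_right _ (le_of_lt hfacpos)
              calc (1/8:ℝ)^n ≤ (1/8:ℝ)^2 := by
                    apply pow_le_pow_of_le_one (by norm_num) (by norm_num) hn2
                _ = 1/64 := by norm_num
      have hprod : (Real.sqrt n/2)^n * (2/Real.sqrt n)^n = 1 := by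
        rw [← mul_pow, div_mul_div_comm]
        rw [show Real.sqrt n * 2 / (2 * Real.sqrt n) = 1 by field_simp]
        exact one_pow n
      rw [div_le_iff₀ hfacpos]
      have goal' : (2*R)^n * (Real.sqrt n/2)^n ≤ (1/64) * n.factorial := by
        rw [hmm, hx2]
        exact hkey2
      have hstep := mul_le_mul_of_nonneg_right goal'
        (pow_nonneg (by positivity) n : (0:ℝ) ≤ (2/Real.sqrt n)^n)
      calc (2*R)^n = (2*R)^n * ((Real.sqrt n/2)^n * (2/Real.sqrt n)^n) := by
            rw [hprod, mul_one]
        _ = (2*R)^n * (Real.sqrt n/2)^n * (2/Real.sqrt n)^n := by ring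
        _ ≤ (1/64) * n.factorial * (2/Real.sqrt n)^n := hstep
        _ = (1/64) * (2/Real.sqrt n)^n * n.factorial := by ring
    have hcone : volume (Set.Ioo (0:ℝ) 1 • (Subtype.val '' A))
        ≤ ENNReal.ofReal (1/64) * volume (ball (0 : EuclideanSpace ℝ (Fin n)) 1) := by
      have hsub2 : Set.Ioo (0:ℝ) 1 • (Subtype.val '' A)
          ⊆ {y : EuclideanSpace ℝ (Fin n) | ∑ i, |y i| ≤ R} := by
        rintro y ⟨r, hr, v, hv, rfl⟩
        obtain ⟨x, hxA, rfl⟩ := hv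
        have hxs : ∑ i, |(x : EuclideanSpace ℝ (Fin n)) i| ≤ R := hxA
        simp only [Set.mem_setOf_eq]
        have habs : ∀ i, |(r • (x : EuclideanSpace ℝ (Fin n))) i|
            = r * |(x : EuclideanSpace ℝ (Fin n)) i| := fun i => by
          rw [PiLp.smul_apply, smul_eq_mul, abs_mul, abs_of_pos hr.1]
        rw [Finset.sum_congr rfl (fun i _ => habs i), ← Finset.mul_sum]
        calc r * ∑ i, |(x : EuclideanSpace ℝ (Fin n)) i| ≤ 1 * R := by
              apply mul_le_mul hr.2.le hxs _ zero_le_one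
              exact Finset.sum_nonneg (fun i _ => abs_nonneg _)
          _ = R := one_mul R
      calc volume (Set.Ioo (0:ℝ) 1 • (Subtype.val '' A))
          ≤ volume {y : EuclideanSpace ℝ (Fin n) | ∑ i, |y i| ≤ R} := measure_mono hsub2
        _ = ENNReal.ofReal ((2*R)^n / n.factorial) := l1ball_volume n hn1 hR0
        _ ≤ ENNReal.ofReal ((1/64) * (2/Real.sqrt n)^n) := ENNReal.ofReal_le_ofReal keyreal
        _ = ENNReal.ofReal (1/64) * ENNReal.ofReal ((2/Real.sqrt n)^n) :=
            ENNReal.ofReal_mul (by norm_num)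
        _ ≤ ENNReal.ofReal (1/64) * volume (ball (0 : EuclideanSpace ℝ (Fin n)) 1) :=
            mul_le_mul_right (cube_le_ball_volume n hn1) _
    have hAle := uniformSphere_le hn1 hAmeas hcone
    exact absurd (le_trans h₁ (le_trans (measure_mono hsub) hAle))
      (fun h => half_le_ofReal_contra (by norm_num) h)
  · -- upper bound
    by_contra hM
    push_neg at hM
    set L := Real.log n with hL
    have hL0 : 0 ≤ L := Real.log_nonneg (by exact_mod_cast hn1)
    set t : ℝ := 10 * Real.sqrt L / Real.sqrt n with ht
    have ht0 : 0 ≤ t := by positivity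
    set c := t/3 with hc
    have hc0 : 0 ≤ c := by positivity
    set ρ := Real.sqrt (1 - c^2) with hρ
    have hρ0 : 0 ≤ ρ := Real.sqrt_nonneg _
    have hkt : (k:ℝ) * t < M := by
      calc (k:ℝ)*t = 10*(k:ℝ)*Real.sqrt L/Real.sqrt n := by rw [ht]; ring
        _ < M := hM
    set A : Fin n → Set (sphere (0 : EuclideanSpace ℝ (Fin n)) 1) :=
      fun i => {x | t ≤ |(x : EuclideanSpace ℝ (Fin n)) i|} with hAdef
    have hSubset : {x : sphere (0 : EuclideanSpace ℝ (Fin n)) 1 |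
        M ≤ topkNorm n k hk (fun i => (x : EuclideanSpace ℝ (Fin n)) i)} ⊆ ⋃ i, A i := by
      intro x hx
      simp only [Set.mem_setOf_eq] at hx
      obtain ⟨S₀, hScard, hSval⟩ := topk_le_exists hk (fun i => (x : EuclideanSpace ℝ (Fin n)) i)
      have hsum : ∑ _i ∈ S₀, t < ∑ i ∈ S₀, |(x : EuclideanSpace ℝ (Fin n)) i| := by
        rw [Finset.sum_const, hScard, nsmul_eq_mul]
        calc (k:ℝ)*t < M := hkt
          _ ≤ topkNorm n k hk (fun i => (x : EuclideanSpace ℝ (Fin n)) i) := hx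
          _ = ∑ i ∈ S₀, |(x : EuclideanSpace ℝ (Fin n)) i| := hSval
      obtain ⟨i, hiS, hti⟩ := Finset.exists_lt_of_sum_lt hsum
      exact Set.mem_iUnion.mpr ⟨i, le_of_lt hti⟩
    have hmeasA : ∀ i, MeasurableSet (A i) := fun i =>
      (isClosed_le continuous_const
        (((EuclideanSpace.proj i).continuous.comp continuous_subtype_val).abs)).measurableSet
    have hcb : ∀ (z : EuclideanSpace ℝ (Fin n)) (s : ℝ), 0 ≤ s →
        volume (closedBall z s)
          = ENNReal.ofReal (s^n) * volume (ball (0 : EuclideanSpace ℝ (Fin n)) 1) := by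
      intro z s hs
      have : Nontrivial (EuclideanSpace ℝ (Fin n)) := by
        have : Nonempty (Fin n) := ⟨⟨0, by omega⟩⟩
        infer_instance
      rw [Measure.addHaar_closedBall_eq_addHaar_ball, Measure.addHaar_ball volume z hs,
        finrank_euclideanSpace_fin]
    have hAi : ∀ i, uniformSphere n (A i)
        ≤ ENNReal.ofReal ((1/3:ℝ)^n) + (ENNReal.ofReal (ρ^n) + ENNReal.ofReal (ρ^n)) := by
      intro i
      apply uniformSphere_le hn1 (hmeasA i)
      have hconesub : Set.Ioo (0:ℝ) 1 • (Subtype.val '' (A i)) ⊆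
          closedBall (0 : EuclideanSpace ℝ (Fin n)) (1/3)
            ∪ (closedBall (EuclideanSpace.single i c) ρ
              ∪ closedBall (EuclideanSpace.single i (-c)) ρ) := by
        rintro y ⟨r, hr, v, hv, rfl⟩
        obtain ⟨x, hxA, rfl⟩ := hv
        have hxnorm : ‖(x : EuclideanSpace ℝ (Fin n))‖ = 1 := mem_sphere_zero_iff_norm.mp x.2
        have hynorm : ‖r • (x : EuclideanSpace ℝ (Fin n))‖ = r := by
          rw [norm_smul, Real.norm_eq_abs, abs_of_pos hr.1, hxnorm, mul_one]
        have hxt : t ≤ |(x : EuclideanSpace ℝ (Fin n)) i| := hxA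
        rcases le_or_gt r (1/3) with h13 | h13
        · left
          rw [mem_closedBall_zero_iff, hynorm]
          exact h13
        · right
          have habs : |(r • (x : EuclideanSpace ℝ (Fin n))) i|
              = r * |(x : EuclideanSpace ℝ (Fin n)) i| := by
            rw [PiLp.smul_apply, smul_eq_mul, abs_mul, abs_of_pos hr.1]
          have hyi : c ≤ |(r • (x : EuclideanSpace ℝ (Fin n))) i| := by
            rw [habs, hc]
            calc t/3 ≤ r * t := by nlinarith
              _ ≤ r * |(x : EuclideanSpace ℝ (Fin n)) i| :=
                  mul_le_mul_of_nonneg_left hxt hr.1.le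
          have hy1 : ‖r • (x : EuclideanSpace ℝ (Fin n))‖ ≤ 1 := by
            rw [hynorm]; exact hr.2.le
          rcases le_or_gt 0 ((r • (x : EuclideanSpace ℝ (Fin n))) i) with h0 | h0
          · left
            apply mem_cap hc0 hy1
            rwa [abs_of_nonneg h0] at hyi
          · right
            apply mem_cap_neg hc0 hy1
            rw [abs_of_neg h0] at hyi
            linarith
      calc volume (Set.Ioo (0:ℝ) 1 • (Subtype.val '' (A i)))
          ≤ volume (closedBall (0 : EuclideanSpace ℝ (Fin n)) (1/3)
            ∪ (closedBall (EuclideanSpace.single i c) ρ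
              ∪ closedBall (EuclideanSpace.single i (-c)) ρ)) := measure_mono hconesub
        _ ≤ volume (closedBall (0 : EuclideanSpace ℝ (Fin n)) (1/3))
            + (volume (closedBall (EuclideanSpace.single i c) ρ)
              + volume (closedBall (EuclideanSpace.single i (-c)) ρ)) :=
            le_trans (measure_union_le _ _) (add_le_add le_rfl (measure_union_le _ _))
        _ = (ENNReal.ofReal ((1/3:ℝ)^n) + (ENNReal.ofReal (ρ^n) + ENNReal.ofReal (ρ^n)))
            * volume (ball (0 : EuclideanSpace ℝ (Fin n)) 1) := by
            rw [hcb _ _ (by norm_num : (0:ℝ) ≤ 1/3), hcb _ _ hρ0, hcb _ _ hρ0]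
            ring
    -- sum up
    have hchain : (1/2:ℝ≥0∞)
        ≤ ∑ i : Fin n, (ENNReal.ofReal ((1/3:ℝ)^n)
            + (ENNReal.ofReal (ρ^n) + ENNReal.ofReal (ρ^n))) := by
      calc (1/2:ℝ≥0∞) ≤ uniformSphere n {x : sphere (0 : EuclideanSpace ℝ (Fin n)) 1 |
            M ≤ topkNorm n k hk (fun i => (x : EuclideanSpace ℝ (Fin n)) i)} := h₂
        _ ≤ uniformSphere n (⋃ i, A i) := measure_mono hSubset
        _ ≤ ∑' i : Fin n, uniformSphere n (A i) := measure_iUnion_le _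
        _ = ∑ i : Fin n, uniformSphere n (A i) := tsum_fintype _
        _ ≤ ∑ i : Fin n, (ENNReal.ofReal ((1/3:ℝ)^n)
            + (ENNReal.ofReal (ρ^n) + ENNReal.ofReal (ρ^n))) :=
            Finset.sum_le_sum (fun i _ => hAi i)
    have hsum2 : ∑ i : Fin n, (ENNReal.ofReal ((1/3:ℝ)^n)
            + (ENNReal.ofReal (ρ^n) + ENNReal.ofReal (ρ^n)))
        = ENNReal.ofReal ((n:ℝ) * ((1/3:ℝ)^n + (ρ^n + ρ^n))) := by
      rw [Finset.sum_const, Finset.card_univ, Fintype.card_fin]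
      rw [← ENNReal.ofReal_add (by positivity) (by positivity),
        ← ENNReal.ofReal_add (by positivity) (by positivity)]
      rw [nsmul_eq_mul, ← ENNReal.ofReal_natCast n, ← ENNReal.ofReal_mul (by positivity)]
    rw [hsum2] at hchain
    -- final numeric bound
    have hρn : ρ^n ≤ 1/(n:ℝ)^5 := by
      have h1 : ρ ≤ Real.exp (-(c^2)/2) := sqrt_one_sub_le_exp c
      have h2 : ρ^n ≤ Real.exp (-(c^2)/2)^n := pow_le_pow_left₀ hρ0 h1 n
      have h3 : Real.exp (-(c^2)/2)^n = Real.exp ((n:ℕ) * (-(c^2)/2)) :=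
        (Real.exp_nat_mul _ n).symm
      have ht2 : t^2 = 100*L/(n:ℝ) := by
        rw [ht, div_pow, mul_pow, Real.sq_sqrt hL0, Real.sq_sqrt (le_of_lt hnpos)]
        ring
      have hc2 : c^2 = 100*L/(9*(n:ℝ)) := by
        rw [hc, div_pow, ht2, div_div]
        norm_num [mul_comm]
      have h4 : (n:ℝ) * (-(c^2)/2) ≤ -(5*L) := by
        rw [hc2]
        have : (n:ℝ) * (-(100*L/(9*(n:ℝ)))/2) = -(50*L/9) := by
          field_simp
          ring
        rw [this]
        linarith
      have h5 : Real.exp ((n:ℕ) * (-(c^2)/2)) ≤ Real.exp (-(5*L)) := Real.exp_le_exp.mpr h4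
      have h6 : Real.exp (-(5*L)) = 1/(n:ℝ)^5 := by
        rw [Real.exp_neg]
        rw [show (5:ℝ)*L = L+L+L+L+L by ring]
        rw [Real.exp_add, Real.exp_add, Real.exp_add, Real.exp_add, Real.exp_log hnpos]
        rw [one_div]
        congr 1
        ring
      calc ρ^n ≤ Real.exp (-(c^2)/2)^n := h2
        _ = Real.exp ((n:ℕ) * (-(c^2)/2)) := h3
        _ ≤ Real.exp (-(5*L)) := h5
        _ = 1/(n:ℝ)^5 := h6
    have hfinal : (n:ℝ) * ((1/3:ℝ)^n + (ρ^n + ρ^n)) < 1/2 := by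
      have h3n : (0:ℝ) < 3^n := by positivity
      have hterm1 : (n:ℝ) * (1/3:ℝ)^n ≤ 2/9 := by
        have h9 := nine_n_le n hn2
        have heq : (n:ℝ) * (1/3:ℝ)^n = (n:ℝ) / 3^n := by
          rw [div_pow, one_pow]
          ring
        rw [heq, div_le_div_iff₀ h3n (by norm_num : (0:ℝ) < 9)]
        linarith
      have hterm2 : (n:ℝ) * (ρ^n + ρ^n) ≤ 1/8 := by
        have h16 : (16:ℝ) ≤ (n:ℝ)^4 := by
          calc (16:ℝ) = 2^4 := by norm_num
            _ ≤ (n:ℝ)^4 := pow_le_pow_left₀ (by norm_num) hnR 4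
        have hn5 : (n:ℝ)^5 = (n:ℝ) * (n:ℝ)^4 := by ring
        have : (n:ℝ) * (ρ^n + ρ^n) ≤ (n:ℝ) * (2/(n:ℝ)^5) := by
          apply mul_le_mul_of_nonneg_left _ (le_of_lt hnpos)
          have := hρn
          rw [show (2:ℝ)/(n:ℝ)^5 = 1/(n:ℝ)^5 + 1/(n:ℝ)^5 by ring]
          linarith
        calc (n:ℝ) * (ρ^n + ρ^n) ≤ (n:ℝ) * (2/(n:ℝ)^5) := this
          _ = 2/(n:ℝ)^4 := by
              rw [hn5]
              field_simp
          _ ≤ 1/8 := by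
              rw [div_le_div_iff₀ (by positivity) (by norm_num : (0:ℝ) < 8)]
              linarith
      have hdistrib : (n:ℝ) * ((1/3:ℝ)^n + (ρ^n + ρ^n))
          = (n:ℝ) * (1/3:ℝ)^n + (n:ℝ) * (ρ^n + ρ^n) := by ring
      rw [hdistrib]
      linarith
    exact half_le_ofReal_contra hfinal hchain
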